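/- Let 0 < p₁ < ⋯ < p_K ≤ 1 define a symmetric stingy quantum race with unique coinciding Nash equilibrium (x,x) supported on {T*, ..., K}, where x_t = r_{T*}/z_{T*} for t = T* and x_t = q_t/z_{T*} for T* < t ≤ K. Then z_{T*} = 1 + √(1 + 1/p_K² + σ(T*)), where σ(T) = p_T² r_T² + Σ_{i=T+1}^K p_i² q_i². In particular, 1/z_{T*} ≤ √2 − 1. -/

import Mathlib

open Finset

private lemma tele_aux (g : ℕ → ℝ) (a : ℕ) : ∀ b : ℕ, a ≤ b →
    ∑ i ∈ Finset.Icc (a+1) b, (g (i-1) - g i) = g a - g b := by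
  intro b hab
  induction b, hab using Nat.le_induction with
  | base => simp
  | succ b hb ih =>
    rw [Finset.sum_Icc_succ_top (by omega : a + 1 ≤ b + 1)]
    simp [ih]

private lemma aux_ge (x : ℝ) (hx : 0 < x) (h2 : 2 ≤ (x - 1)^2) : 1 ≤ x := by
  nlinarith

private lemma aux_final (x : ℝ) (hx : 0 < x) (hge : 1 + Real.sqrt 2 ≤ x) :
    1 / x ≤ Real.sqrt 2 - 1 := by
  have hs2 := Real.sq_sqrt (by norm_num : (0:ℝ) ≤ 2)
  have hs2n := Real.sqrt_nonneg 2
  rw [div_le_iff₀ hx]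
  nlinarith

theorem stmt_6 (K : ℕ) (p q r z σ : ℕ → ℝ) (Tstar : ℕ)
    (hK : 2 ≤ K)
    (hp1 : 0 < p 1) (hpK : p K ≤ 1)
    (hpmono : ∀ i j, 1 ≤ i → i < j → j ≤ K → p i < p j)
    (hq : ∀ i, q i = (1 / p i) * (1 / p (i-1) - 1 / p i))
    (hr : ∀ T, r T = (1 / (1 - p T)) *
      (1 / p K - ∑ i ∈ Finset.Icc (T+1) K, (1 - p i) * q i))
    (hz : ∀ T, z T = r T + ∑ i ∈ Finset.Icc (T+1) K, q i)
    (hσ : ∀ T, σ T = (p T)^2 * (r T)^2 + ∑ i ∈ Finset.Icc (T+1) K, (p i)^2 * (q i)^2)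
    (hT1 : 1 ≤ Tstar) (hT2 : Tstar ≤ K) (hT3 : 0 < r Tstar)
    (hT4 : ∀ T, 1 ≤ T → T < Tstar → r T ≤ 0) :
    z Tstar = 1 + Real.sqrt (1 + 1 / (p K)^2 + σ Tstar) ∧
    1 / z Tstar ≤ Real.sqrt 2 - 1 := by
  -- positivity of p on [1, K]
  have hp : ∀ i, 1 ≤ i → i ≤ K → 0 < p i := by
    intro i h1 h2
    rcases eq_or_lt_of_le h1 with h | h
    · rwa [← h]
    · exact hp1.trans (hpmono 1 i le_rfl h h2)
  have hpK0 : 0 < p K := hp K (by omega) le_rfl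
  have hpT0 : 0 < p Tstar := hp Tstar hT1 hT2
  -- p Tstar < 1
  have hne : p Tstar ≠ 1 := by
    intro h
    have h0 := hr Tstar
    rw [h] at h0
    norm_num at h0
    rw [h0] at hT3
    exact lt_irrefl 0 hT3
  have hpTle : p Tstar ≤ 1 := by
    rcases eq_or_lt_of_le hT2 with h | h
    · rw [h]; exact hpK
    · exact le_of_lt (lt_of_lt_of_le (hpmono Tstar K hT1 h le_rfl) hpK)
  have hpT1 : p Tstar < 1 := lt_of_le_of_ne hpTle hne
  have hu : (1 : ℝ) - p Tstar ≠ 0 := by linarith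
  set A := ∑ i ∈ Finset.Icc (Tstar+1) K, q i with hA
  -- positivity of each q i on the support
  have hqpos : ∀ i ∈ Finset.Icc (Tstar+1) K, 0 < q i := by
    intro i hi
    rw [Finset.mem_Icc] at hi
    obtain ⟨h1, h2⟩ := hi
    have h01 : 0 < p (i-1) := hp _ (by omega) (by omega)
    have h02 : 0 < p i := hp i (by omega) h2
    have hlt : p (i-1) < p i := hpmono (i-1) i (by omega) (by omega) h2
    have hdiv : 1 / p i < 1 / p (i-1) := one_div_lt_one_div_of_lt h01 hlt
    rw [hq]
    have : (0:ℝ) < 1 / p i := by positivity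
    nlinarith
  have hAnn : 0 ≤ A := Finset.sum_nonneg fun i hi => (hqpos i hi).le
  -- telescoping sums
  have hS2 : ∑ i ∈ Finset.Icc (Tstar+1) K, (1 / p (i-1) - 1 / p i)
      = 1 / p Tstar - 1 / p K := tele_aux (fun i => 1 / p i) Tstar K hT2
  have hS2sq : ∑ i ∈ Finset.Icc (Tstar+1) K, ((1 / p (i-1))^2 - (1 / p i)^2)
      = (1 / p Tstar)^2 - (1 / p K)^2 := tele_aux (fun i => (1 / p i)^2) Tstar K hT2
  -- rewrite the two structured sums
  have hrw1 : ∑ i ∈ Finset.Icc (Tstar+1) K, (1 - p i) * q i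
      = A - (1 / p Tstar - 1 / p K) := by
    rw [hA, ← hS2, ← Finset.sum_sub_distrib]
    apply Finset.sum_congr rfl
    intro i hi
    rw [Finset.mem_Icc] at hi
    have h01 : p (i-1) ≠ 0 := (hp _ (by omega) (by omega)).ne'
    have h02 : p i ≠ 0 := (hp i (by omega) hi.2).ne'
    rw [hq]
    field_simp
  have hrw2 : ∑ i ∈ Finset.Icc (Tstar+1) K, (p i)^2 * (q i)^2
      = (1 / p Tstar)^2 - (1 / p K)^2 - 2 * A := by
    have hcong : ∀ i ∈ Finset.Icc (Tstar+1) K,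
        (p i)^2 * (q i)^2 = ((1 / p (i-1))^2 - (1 / p i)^2) - 2 * q i := by
      intro i hi
      rw [Finset.mem_Icc] at hi
      have h01 : p (i-1) ≠ 0 := (hp _ (by omega) (by omega)).ne'
      have h02 : p i ≠ 0 := (hp i (by omega) hi.2).ne'
      rw [hq]
      field_simp
      ring
    rw [Finset.sum_congr rfl hcong, Finset.sum_sub_distrib, hS2sq, ← Finset.mul_sum, ← hA]
  -- closed form for r
  have hrT : (1 - p Tstar) * r Tstar = 1 / p Tstar - A := by
    rw [hr, hrw1]
    field_simp
    ring
  have hz' : z Tstar = r Tstar + A := by rw [hz]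
  have hσ' : σ Tstar = (p Tstar)^2 * (r Tstar)^2
      + ((1 / p Tstar)^2 - (1 / p K)^2 - 2 * A) := by rw [hσ, hrw2]
  -- the key identity
  have key : (z Tstar - 1)^2 = 1 + 1 / (p K)^2 + σ Tstar := by
    have hA2 : A = 1 / p Tstar - (1 - p Tstar) * r Tstar := by linarith
    rw [hz', hσ', hA2]
    have hpT0' : p Tstar ≠ 0 := hpT0.ne'
    have hpK0' : p K ≠ 0 := hpK0.ne'
    field_simp
    ring
  -- σ is nonnegative
  have hσnn : 0 ≤ σ Tstar := by
    rw [hσ]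
    have : (0:ℝ) ≤ ∑ i ∈ Finset.Icc (Tstar+1) K, (p i)^2 * (q i)^2 :=
      Finset.sum_nonneg fun i _ => by positivity
    positivity
  have h1K : 1 ≤ 1 / (p K)^2 := by
    rw [le_div_iff₀ (by positivity)]
    nlinarith
  have hrhs2 : 2 ≤ 1 + 1 / (p K)^2 + σ Tstar := by linarith
  have hzpos : 0 < z Tstar := by rw [hz']; linarith
  have hz2 : 2 ≤ (z Tstar - 1)^2 := by rw [key]; exact hrhs2
  have hz1 : 1 ≤ z Tstar := aux_ge _ hzpos hz2
  have hs2 := Real.sq_sqrt (by norm_num : (0:ℝ) ≤ 2)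
  have hs2n := Real.sqrt_nonneg 2
  have hzge : 1 + Real.sqrt 2 ≤ z Tstar := by
    have h := Real.sqrt_le_sqrt hz2
    rw [Real.sqrt_sq (by linarith : 0 ≤ z Tstar - 1)] at h
    linarith
  constructor
  · rw [← key, Real.sqrt_sq (by linarith : 0 ≤ z Tstar - 1)]
    ring
  · exact aux_final _ hzpos hzge
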